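/- For the mixed polynomial f(z₁, z₂) = z₁|z₂|² on ℂ², at any point with z₁ ≠ 0 and z₂ ≠ 0 one has f(z₁,z₂)/|f(z₁,z₂)| = z₁/|z₁|. Consequently, for a = ρe^{iθ} with ρ > 0 and any 0 < ε < ρ, the image under f of the set U = {(z₁,z₂) : |z₁ − a| ≤ ε, |z₂| ≤ ε} is contained in {0} ∪ {η ∈ ℂ \ {0} : |Re(e^{−iθ} η/|η|) | ≥ cos α} where α = arcsin(ε/ρ); in particular f(U) is not a neighborhood of 0 in ℂ, so f is not an open mapping along the axis {z₂ = 0}. -/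

import Mathlib

open Complex

lemma tibar_key (ρ ε x y : ℝ) (hρ : 0 < ρ) (hε : 0 < ε) (hερ : ε < ρ)
    (h : (x - ρ)^2 + y^2 ≤ ε^2) :
    Real.cos (Real.arcsin (ε / ρ)) ≤ x / Real.sqrt (x^2 + y^2) := by
  have hx : 0 < x := by nlinarith [sq_nonneg y, sq_nonneg (x - ρ)]
  have hs : 0 < x^2 + y^2 := by positivity
  rw [Real.cos_arcsin]
  have h1 : 1 - (ε/ρ)^2 = (ρ^2 - ε^2)/ρ^2 := by field_simp
  have h2 : x / Real.sqrt (x^2 + y^2) = Real.sqrt (x^2 / (x^2 + y^2)) := by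
    rw [Real.sqrt_div (sq_nonneg x), Real.sqrt_sq hx.le]
  rw [h1, h2]
  apply Real.sqrt_le_sqrt
  rw [div_le_div_iff₀ (by positivity) hs]
  nlinarith [sq_nonneg (ρ*x - ρ^2 + ε^2),
    mul_nonneg (by nlinarith : (0:ℝ) ≤ ρ^2 - ε^2)
      (by linarith : (0:ℝ) ≤ ε^2 - (x-ρ)^2 - y^2)]

lemma tibar_part1 (z₁ z₂ : ℂ) (h2 : z₂ ≠ 0) :
    (z₁ * (z₂ * (starRingEnd ℂ) z₂)) /
        ((‖z₁ * (z₂ * (starRingEnd ℂ) z₂)‖ : ℝ) : ℂ) =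
      z₁ / ((‖z₁‖ : ℝ) : ℂ) := by
  rw [Complex.mul_conj]
  rw [norm_mul]
  rw [Complex.norm_real, Real.norm_eq_abs]
  rw [_root_.abs_of_nonneg (Complex.normSq_nonneg z₂)]
  push_cast
  have ht : ((Complex.normSq z₂ : ℝ) : ℂ) ≠ 0 :=
    Complex.ofReal_ne_zero.mpr (Complex.normSq_pos.mpr h2).ne'
  exact mul_div_mul_right z₁ ((‖z₁‖ : ℝ) : ℂ) ht

lemma tibar_subset (ρ θ ε : ℝ) (hρ : 0 < ρ) (hε : 0 < ε) (hερ : ε < ρ) :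
    ((fun p : ℂ × ℂ => p.1 * (p.2 * (starRingEnd ℂ) p.2)) ''
        {p : ℂ × ℂ | ‖p.1 - (ρ : ℂ) * Complex.exp (θ * Complex.I)‖ ≤ ε ∧
          ‖p.2‖ ≤ ε} ⊆
      {0} ∪ {η : ℂ | η ≠ 0 ∧
        Real.cos (Real.arcsin (ε / ρ)) ≤
          |(Complex.exp (-(θ : ℂ) * Complex.I) * η / ((‖η‖ : ℝ) : ℂ)).re|}) := by
  rintro η ⟨⟨z₁, z₂⟩, ⟨hz1, hz2⟩, rfl⟩
  by_cases h2 : z₂ = 0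
  · left; simp [h2]
  by_cases h1 : z₁ = 0
  · left; simp [h1]
  right
  have hconj : (starRingEnd ℂ) z₂ ≠ 0 := by simpa using h2
  refine ⟨mul_ne_zero h1 (mul_ne_zero h2 hconj), ?_⟩
  set w : ℂ := Complex.exp (-(θ : ℂ) * Complex.I) * z₁ with hw
  have habsw : ‖w‖ = ‖z₁‖ := by
    rw [hw, norm_mul, Complex.norm_exp]
    simp
  have heq : Complex.exp (-(θ : ℂ) * Complex.I) * (z₁ * (z₂ * (starRingEnd ℂ) z₂)) /
      ((‖z₁ * (z₂ * (starRingEnd ℂ) z₂)‖ : ℝ) : ℂ) =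
      w / ((‖z₁‖ : ℝ) : ℂ) := by
    rw [mul_div_assoc, tibar_part1 z₁ z₂ h2, hw, mul_div_assoc]
  rw [heq]
  have hre : (w / ((‖z₁‖ : ℝ) : ℂ)).re = w.re / ‖z₁‖ :=
    Complex.div_ofReal_re w ‖z₁‖
  rw [hre]
  -- the disc condition transported to w
  have hwsub : w - (ρ : ℂ) = Complex.exp (-(θ : ℂ) * Complex.I) *
      (z₁ - (ρ : ℂ) * Complex.exp (θ * Complex.I)) := by
    rw [hw, mul_sub]
    congr 1
    rw [show Complex.exp (-(θ : ℂ) * Complex.I) * ((ρ : ℂ) * Complex.exp (θ * Complex.I)) =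
      (ρ : ℂ) * (Complex.exp (-(θ : ℂ) * Complex.I) * Complex.exp (θ * Complex.I)) by ring,
      ← Complex.exp_add]
    simp
  have habssub : ‖w - (ρ : ℂ)‖ ≤ ε := by
    rw [hwsub, norm_mul, Complex.norm_exp]
    simpa using hz1
  have hd : (w.re - ρ)^2 + w.im^2 ≤ ε^2 := by
    have := pow_le_pow_left₀ (norm_nonneg _) habssub 2
    rw [Complex.sq_norm, Complex.normSq_apply] at this
    simp only [Complex.sub_re, Complex.sub_im, Complex.ofReal_re, Complex.ofReal_im,
      sub_zero] at this
    nlinarith [this]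
  have hsq : Real.sqrt (w.re^2 + w.im^2) = ‖z₁‖ := by
    rw [← habsw, Complex.norm_def, Complex.normSq_apply]
    ring_nf
  have := tibar_key ρ ε w.re w.im hρ hε hερ hd
  rw [hsq] at this
  exact this.trans (le_abs_self _)

/-- Tibar's example `f(z₁,z₂) = z₁|z₂|²`: on the torus the argument of `f` equals the argument
of `z₁`; consequently the image of the polydisc neighborhood `U` of a point `(a,0)`, `a ≠ 0`,
is contained in an angular region, hence is not a neighborhood of `0`: `f` is not an open
mapping along `{z₂ = 0}`. -/
theorem tibar_not_open_along_axis :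
    (∀ z₁ z₂ : ℂ, z₁ ≠ 0 → z₂ ≠ 0 →
      (z₁ * (z₂ * (starRingEnd ℂ) z₂)) /
          ((‖z₁ * (z₂ * (starRingEnd ℂ) z₂)‖ : ℝ) : ℂ) =
        z₁ / ((‖z₁‖ : ℝ) : ℂ)) ∧
    ∀ ρ θ ε : ℝ, 0 < ρ → 0 < ε → ε < ρ →
      ((fun p : ℂ × ℂ => p.1 * (p.2 * (starRingEnd ℂ) p.2)) ''
          {p : ℂ × ℂ | ‖p.1 - (ρ : ℂ) * Complex.exp (θ * Complex.I)‖ ≤ ε ∧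
            ‖p.2‖ ≤ ε} ⊆
        {0} ∪ {η : ℂ | η ≠ 0 ∧
          Real.cos (Real.arcsin (ε / ρ)) ≤
            |(Complex.exp (-(θ : ℂ) * Complex.I) * η / ((‖η‖ : ℝ) : ℂ)).re|}) ∧
      ¬ ((fun p : ℂ × ℂ => p.1 * (p.2 * (starRingEnd ℂ) p.2)) ''
          {p : ℂ × ℂ | ‖p.1 - (ρ : ℂ) * Complex.exp (θ * Complex.I)‖ ≤ ε ∧
            ‖p.2‖ ≤ ε} ∈ nhds (0 : ℂ)) := by
  constructor
  · exact fun z₁ z₂ _ h2 => tibar_part1 z₁ z₂ h2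
  intro ρ θ ε hρ hε hερ
  refine ⟨tibar_subset ρ θ ε hρ hε hερ, ?_⟩
  intro hmem
  rw [Metric.mem_nhds_iff] at hmem
  obtain ⟨δ, hδ, hball⟩ := hmem
  set η : ℂ := ((δ/2 : ℝ) : ℂ) * Complex.exp (θ * Complex.I) * Complex.I with hη
  have hηabs : ‖η‖ = δ/2 := by
    rw [hη, norm_mul, norm_mul, Complex.norm_exp]
    simp [_root_.abs_of_pos hδ]
  have hηne : η ≠ 0 := by
    intro h
    rw [h] at hηabs
    simp at hηabs
    linarith
  have hηball : η ∈ Metric.ball (0 : ℂ) δ := by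
    rw [Metric.mem_ball, dist_zero_right, hηabs]
    linarith
  have := tibar_subset ρ θ ε hρ hε hερ (hball hηball)
  rcases this with h0 | ⟨_, hcos⟩
  · exact hηne h0
  -- compute: exp(-θ i) * η / |η| = I
  have hcalc : Complex.exp (-(θ : ℂ) * Complex.I) * η / ((‖η‖ : ℝ) : ℂ) =
      Complex.I := by
    rw [hηabs, hη]
    rw [show Complex.exp (-(θ : ℂ) * Complex.I) *
        (((δ/2 : ℝ) : ℂ) * Complex.exp (θ * Complex.I) * Complex.I) =
        ((δ/2 : ℝ) : ℂ) * Complex.I *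
          (Complex.exp (-(θ : ℂ) * Complex.I) * Complex.exp (θ * Complex.I)) by ring,
      ← Complex.exp_add]
    simp only [neg_mul, neg_add_cancel, Complex.exp_zero, mul_one]
    rw [mul_comm, mul_div_assoc]
    rw [div_self (Complex.ofReal_ne_zero.mpr (by linarith : δ/2 ≠ 0))]
    ring
  rw [hcalc] at hcos
  simp only [Complex.I_re, abs_zero] at hcos
  have hpos : 0 < Real.cos (Real.arcsin (ε / ρ)) := by
    rw [Real.cos_arcsin]
    apply Real.sqrt_pos.mpr
    have : ε / ρ < 1 := (div_lt_one hρ).mpr hερ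
    have h0 : 0 < ε / ρ := div_pos hε hρ
    nlinarith
  linarith
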